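/- Let n ≥ 2 and fix ℓ ∈ [n]. For T ∈ Arb(ℓ,n) let D̄_T ⊆ ℝ^{(n−1)×(n−1)} be the convex cone generated by {M̄_{i,j} : (i,j) ∉ E(T)}, and let D̄_n be the convex cone generated by all M̄_{i,j} with i ≠ j in [n]. Then: (a) for each T ∈ Arb(ℓ,n), the (n−1)² matrices {M̄_{i,j} : (i,j) ∉ E(T)} form a ℤ-basis of the lattice ℤ^{(n−1)×(n−1)} of integer (n−1)×(n−1) matrices (so D̄_T is a full-dimensional unimodular simplicial cone); (b) the union of the cones D̄_T over all T ∈ Arb(ℓ,n) equals D̄_n; (c) for distinct T, T' ∈ Arb(ℓ,n), the topological interiors of D̄_T and D̄_{T'} are disjoint. In other words, the cones {D̄_T : T ∈ Arb(ℓ,n)} form a triangulation of D̄_n into unimodular cones. -/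

import Mathlib

open Finset

/-- The set of `ℓ`-arborescences on `[n]`, encoded by their parent functions. -/
def arbs (n : ℕ) (ℓ : Fin n) : Finset (Fin n → Fin n) :=
  Finset.univ.filter fun p => p ℓ = ℓ ∧ ∀ v, p^[n] v = ℓ

/-- The edge set of the arborescence with parent function `p`. -/
def arbEdges (n : ℕ) (ℓ : Fin n) (p : Fin n → Fin n) : Finset (Fin n × Fin n) :=
  Finset.univ.filter fun e => e.2 ≠ ℓ ∧ p e.2 = e.1

/-- Directed edges between distinct vertices that are not edges of the arborescence. -/
def offEdges (n : ℕ) (ℓ : Fin n) (p : Fin n → Fin n) : Finset (Fin n × Fin n) :=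
  Finset.univ.filter fun e => e.1 ≠ e.2 ∧ e ∉ arbEdges n ℓ p

/-- The real matrix `M̄_{i,j}` (for `i ≠ j` in `[n]`). -/
def Mbar (n : ℕ) (i j : Fin n) : Matrix (Fin (n - 1)) (Fin (n - 1)) ℝ :=
  Matrix.of fun a b =>
    if (a : ℕ) = (i : ℕ) ∧ (b : ℕ) = (j : ℕ) then 1
    else if (a : ℕ) = (i : ℕ) ∧ (j : ℕ) = n - 1 then -1
    else if (i : ℕ) = n - 1 ∧ (b : ℕ) = (j : ℕ) then -1
    else 0

/-- The integer matrix `M̄_{i,j}` (for `i ≠ j` in `[n]`). -/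
def MbarZ (n : ℕ) (i j : Fin n) : Matrix (Fin (n - 1)) (Fin (n - 1)) ℤ :=
  Matrix.of fun a b =>
    if (a : ℕ) = (i : ℕ) ∧ (b : ℕ) = (j : ℕ) then 1
    else if (a : ℕ) = (i : ℕ) ∧ (j : ℕ) = n - 1 then -1
    else if (i : ℕ) = n - 1 ∧ (b : ℕ) = (j : ℕ) then -1
    else 0

/-- The convex cone generated by a finite family of vectors: all nonnegative combinations. -/
def coneOf {ι : Type*} [Fintype ι] {E : Type*} [AddCommMonoid E] [Module ℝ E]
    (v : ι → E) : Set E :=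
  {x | ∃ lam : ι → ℝ, (∀ k, 0 ≤ lam k) ∧ x = ∑ k, lam k • v k}

namespace Stmt10

variable {R : Type*} [CommRing R]

def fg (n : ℕ) (i : Fin n) (a : Fin (n - 1)) : R :=
  if (a : ℕ) = (i : ℕ) then 1 else if (i : ℕ) = n - 1 then -1 else 0

def Mg (n : ℕ) (R : Type*) [CommRing R] (i j : Fin n) :
    Matrix (Fin (n - 1)) (Fin (n - 1)) R :=
  Matrix.of fun a b => (fg n i a : R) * fg n j b

lemma sum_fg_right (n : ℕ) (g : Fin n → R) (b : Fin (n - 1)) (b' l' : Fin n)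
    (hb : (b' : ℕ) = (b : ℕ)) (hl : (l' : ℕ) = n - 1) :
    ∑ j : Fin n, g j * fg n j b = g b' - g l' := by
  have hbl : b' ≠ l' := by
    intro h
    have := b.isLt
    omega
  have key : ∀ j : Fin n, g j * fg n j b
      = (if j = b' then g j else 0) - (if j = l' then g j else 0) := by
    intro j
    by_cases h1 : j = b'
    · subst h1
      have hc : (b : ℕ) = (j : ℕ) := hb.symm
      simp [fg, hc, hbl]
    · by_cases h2 : j = l'
      · subst h2
        have hc1 : ¬ ((b : ℕ) = (j : ℕ)) := by have := b.isLt; omega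
        have hbn : ¬ ((b : ℕ) = n - 1) := by have := b.isLt; omega
        simp [fg, hc1, hbn, hl, h1]
      · have hc1 : ¬ ((b : ℕ) = (j : ℕ)) := by
          intro h; exact h1 (Fin.ext (by omega))
        have hc2 : ¬ ((j : ℕ) = n - 1) := by
          intro h; exact h2 (Fin.ext (by omega))
        simp [fg, hc1, hc2, h1, h2]
  rw [Finset.sum_congr rfl (fun j _ => key j), Finset.sum_sub_distrib]
  simp

lemma sum_fg_zero (n : ℕ) (b : Fin (n - 1)) (b' l' : Fin n)
    (hb : (b' : ℕ) = (b : ℕ)) (hl : (l' : ℕ) = n - 1) :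
    ∑ j : Fin n, (fg n j b : R) = 0 := by
  have := sum_fg_right n (fun _ => (1 : R)) b b' l' hb hl
  simpa using this

/-- `b` viewed in `Fin n`. -/
def emb {n : ℕ} (b : Fin (n - 1)) : Fin n :=
  ⟨(b : ℕ), lt_of_lt_of_le b.isLt (Nat.sub_le n 1)⟩

@[simp] lemma emb_val {n : ℕ} (b : Fin (n - 1)) : ((emb b : Fin n) : ℕ) = (b : ℕ) := rfl

def lst (n : ℕ) (hn : 1 ≤ n) : Fin n := ⟨n - 1, by omega⟩

@[simp] lemma lst_val (n : ℕ) (hn : 1 ≤ n) : ((lst n hn : Fin n) : ℕ) = n - 1 := rfl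

lemma mg_eq_Mbar (n : ℕ) (i j : Fin n) (hij : i ≠ j) (a b : Fin (n - 1)) :
    (if (a : ℕ) = (i : ℕ) ∧ (b : ℕ) = (j : ℕ) then (1 : R)
      else if (a : ℕ) = (i : ℕ) ∧ (j : ℕ) = n - 1 then -1
      else if (i : ℕ) = n - 1 ∧ (b : ℕ) = (j : ℕ) then -1
      else 0) = (fg n i a : R) * fg n j b := by
  have hij' : (i : ℕ) ≠ (j : ℕ) := fun h => hij (Fin.ext h)
  have ha := a.isLt
  have hb := b.isLt
  unfold fg
  split_ifs
  all_goals try ring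
  all_goals (exfalso; omega)

def xh (n : ℕ) (X : Matrix (Fin (n - 1)) (Fin (n - 1)) R) (i j : Fin n) : R :=
  if h : (i : ℕ) < n - 1 ∧ (j : ℕ) < n - 1 then X ⟨i, h.1⟩ ⟨j, h.2⟩ else 0

def dl (n : ℕ) (ℓ : Fin n) (p : Fin n → Fin n)
    (X : Matrix (Fin (n - 1)) (Fin (n - 1)) R) (v : Fin n) : R :=
  if v = ℓ then 0 else xh n X (p v) v - xh n X v v

def rr (n : ℕ) (ℓ : Fin n) (p : Fin n → Fin n)
    (X : Matrix (Fin (n - 1)) (Fin (n - 1)) R) (v : Fin n) : R :=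
  ∑ k ∈ Finset.range n, dl n ℓ p X (p^[k] v)

def cc (n : ℕ) (ℓ : Fin n) (p : Fin n → Fin n)
    (X : Matrix (Fin (n - 1)) (Fin (n - 1)) R) (i j : Fin n) : R :=
  xh n X i j - xh n X j j + rr n ℓ p X i - rr n ℓ p X j

lemma cc_diag (n : ℕ) (ℓ : Fin n) (p : Fin n → Fin n) (X : Matrix (Fin (n - 1)) (Fin (n - 1)) R) (i : Fin n) :
    cc n ℓ p X i i = (0 : R) := by
  unfold cc; ring

lemma cc_tree (n : ℕ) (ℓ : Fin n) (p : Fin n → Fin n) (X : Matrix (Fin (n - 1)) (Fin (n - 1)) R)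
    (hpl : p ℓ = ℓ) (hpn : ∀ v, p^[n] v = ℓ) (v : Fin n) (hv : v ≠ ℓ) :
    cc n ℓ p X (p v) v = (0 : R) := by
  have hr : rr n ℓ p X (p v) = rr n ℓ p X v - dl n ℓ p X v := by
    unfold rr
    have h1 : ∀ k, p^[k] (p v) = p^[k + 1] v :=
      fun k => (Function.iterate_succ_apply p k v).symm
    rw [Finset.sum_congr rfl (fun k _ => by rw [h1 k])]
    have t : (∑ k ∈ Finset.range n, dl n ℓ p X (p^[k + 1] v)) + dl n ℓ p X (p^[0] v)
        = (∑ k ∈ Finset.range n, dl n ℓ p X (p^[k] v)) + dl n ℓ p X (p^[n] v) := by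
      rw [← Finset.sum_range_succ' (fun k => dl n ℓ p X (p^[k] v)) n,
        Finset.sum_range_succ (fun k => dl n ℓ p X (p^[k] v)) n]
    have hz : dl n ℓ p X (p^[n] v) = 0 := by rw [hpn v]; simp [dl]
    have h0 : p^[0] v = v := rfl
    rw [hz, h0] at t
    linear_combination t
  have hd : dl n ℓ p X v = xh n X (p v) v - xh n X v v := by simp [dl, hv]
  unfold cc
  rw [hr, hd]
  ring

lemma sum_row_zero (n : ℕ) (hn : 1 ≤ n) (u : Fin n → R) (a b : Fin (n - 1)) :
    ∑ i : Fin n, ∑ j : Fin n, u i * (fg n i a * fg n j b) = 0 := by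
  have hz := sum_fg_zero (R := R) n b (emb b) (lst n hn) rfl rfl
  refine Finset.sum_eq_zero fun i _ => ?_
  have : ∑ j : Fin n, u i * (fg n i a * fg n j b)
      = (u i * fg n i a) * ∑ j : Fin n, (fg n j b : R) := by
    rw [Finset.mul_sum]
    exact Finset.sum_congr rfl fun j _ => by ring
  rw [this, hz, mul_zero]

lemma sum_col_zero (n : ℕ) (hn : 1 ≤ n) (w : Fin n → R) (a b : Fin (n - 1)) :
    ∑ i : Fin n, ∑ j : Fin n, w j * (fg n i a * fg n j b) = 0 := by
  rw [Finset.sum_comm]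
  have hz := sum_fg_zero (R := R) n a (emb a) (lst n hn) rfl rfl
  refine Finset.sum_eq_zero fun j _ => ?_
  have : ∑ i : Fin n, w j * (fg n i a * fg n j b)
      = (w j * fg n j b) * ∑ i : Fin n, (fg n i a : R) := by
    rw [Finset.mul_sum]
    exact Finset.sum_congr rfl fun i _ => by ring
  rw [this, hz, mul_zero]

lemma kernel_sum (n : ℕ) (hn : 1 ≤ n) (r : Fin n → R) (a b : Fin (n - 1)) :
    ∑ i : Fin n, ∑ j : Fin n, (r i - r j) * (fg n i a * fg n j b) = 0 := by
  have : ∀ i j : Fin n, (r i - r j) * (fg n i a * fg n j b)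
      = r i * (fg n i a * fg n j b) + (- r j) * (fg n i a * fg n j b) := by
    intro i j; ring
  rw [Finset.sum_congr rfl fun i _ => Finset.sum_congr rfl fun j _ => this i j]
  simp only [Finset.sum_add_distrib]
  rw [sum_row_zero n hn r a b, sum_col_zero n hn (fun j => - r j) a b, add_zero]

lemma xh_lst_right (n : ℕ) (X : Matrix (Fin (n - 1)) (Fin (n - 1)) R) (i j : Fin n) (hj : (j : ℕ) = n - 1) :
    xh n X i j = (0 : R) := by
  unfold xh
  rw [dif_neg]
  intro h
  omega

lemma xh_lst_left (n : ℕ) (X : Matrix (Fin (n - 1)) (Fin (n - 1)) R) (i j : Fin n) (hi : (i : ℕ) = n - 1) :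
    xh n X i j = (0 : R) := by
  unfold xh
  rw [dif_neg]
  intro h
  omega

lemma xh_emb (n : ℕ) (X : Matrix (Fin (n - 1)) (Fin (n - 1)) R) (a b : Fin (n - 1)) :
    xh n X (emb a) (emb b) = X a b := by
  unfold xh
  rw [dif_pos ⟨a.isLt, b.isLt⟩]
  congr 1

lemma expand_sum (n : ℕ) (hn : 1 ≤ n) (ℓ : Fin n) (p : Fin n → Fin n) (X : Matrix (Fin (n - 1)) (Fin (n - 1)) R)
    (a b : Fin (n - 1)) :
    ∑ i : Fin n, ∑ j : Fin n, cc n ℓ p X i j * (fg n i a * fg n j b) = X a b := by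
  have split : ∀ i j : Fin n, cc n ℓ p X i j * (fg n i a * fg n j b)
      = xh n X i j * (fg n i a * fg n j b)
        + (rr n ℓ p X i * (fg n i a * fg n j b)
        + (-(xh n X j j) - rr n ℓ p X j) * (fg n i a * fg n j b)) := by
    intro i j; unfold cc; ring
  rw [Finset.sum_congr rfl fun i _ => Finset.sum_congr rfl fun j _ => split i j]
  simp only [Finset.sum_add_distrib]
  rw [sum_row_zero n hn (rr n ℓ p X) a b,
    sum_col_zero n hn (fun j => -(xh n X j j) - rr n ℓ p X j) a b]
  have inner : ∀ i : Fin n, ∑ j : Fin n, xh n X i j * (fg n i a * fg n j b)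
      = xh n X i (emb b) * fg n i a := by
    intro i
    have : ∑ j : Fin n, xh n X i j * (fg n i a * fg n j b)
        = ∑ j : Fin n, (xh n X i j * fg n i a) * fg n j b := by
      exact Finset.sum_congr rfl fun j _ => by ring
    rw [this, sum_fg_right n (fun j => xh n X i j * fg n i a) b (emb b) (lst n hn) rfl rfl]
    rw [xh_lst_right n X i (lst n hn) rfl]
    ring
  rw [Finset.sum_congr rfl fun i _ => inner i]
  have : ∑ i : Fin n, xh n X i (emb b) * fg n i a
      = xh n X (emb a) (emb b) - xh n X (lst n hn) (emb b) :=
    sum_fg_right n (fun i => xh n X i (emb b)) a (emb a) (lst n hn) rfl rfl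
  rw [this, xh_lst_left n X (lst n hn) (emb b) rfl, xh_emb]
  ring


lemma MbarZ_eq_Mg (n : ℕ) (i j : Fin n) (hij : i ≠ j) : MbarZ n i j = Mg n ℤ i j := by
  ext a b
  exact mg_eq_Mbar n i j hij a b

lemma Mbar_eq_Mg (n : ℕ) (i j : Fin n) (hij : i ≠ j) : Mbar n i j = Mg n ℝ i j := by
  ext a b
  exact mg_eq_Mbar n i j hij a b

lemma mem_arbs_iff {n : ℕ} {ℓ : Fin n} {p : Fin n → Fin n} :
    p ∈ arbs n ℓ ↔ p ℓ = ℓ ∧ ∀ v, p^[n] v = ℓ := by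
  simp [arbs]

lemma mem_arbEdges {n : ℕ} {ℓ : Fin n} {p : Fin n → Fin n} {e : Fin n × Fin n} :
    e ∈ arbEdges n ℓ p ↔ e.2 ≠ ℓ ∧ p e.2 = e.1 := by
  simp [arbEdges]

lemma mem_offEdges {n : ℕ} {ℓ : Fin n} {p : Fin n → Fin n} {e : Fin n × Fin n} :
    e ∈ offEdges n ℓ p ↔ e.1 ≠ e.2 ∧ ¬ (e.2 ≠ ℓ ∧ p e.2 = e.1) := by
  simp [offEdges, mem_arbEdges]

lemma arb_ne {n : ℕ} {ℓ : Fin n} {p : Fin n → Fin n} (hp : p ∈ arbs n ℓ)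
    {v : Fin n} (hv : v ≠ ℓ) : p v ≠ v := by
  intro h
  have h2 := (mem_arbs_iff.mp hp).2 v
  rw [Function.iterate_fixed h n] at h2
  exact hv h2

lemma main_identity (n : ℕ) (hn : 1 ≤ n) (ℓ : Fin n) (p : Fin n → Fin n)
    (hp : p ∈ arbs n ℓ) (X : Matrix (Fin (n - 1)) (Fin (n - 1)) R) :
    ∑ e ∈ offEdges n ℓ p, cc n ℓ p X e.1 e.2 • Mg n R e.1 e.2 = X := by
  obtain ⟨hpl, hpn⟩ := mem_arbs_iff.mp hp
  rw [Finset.sum_subset (Finset.subset_univ (offEdges n ℓ p))]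
  · ext a b
    rw [Matrix.sum_apply]
    have hterm : ∀ e : Fin n × Fin n, (cc n ℓ p X e.1 e.2 • Mg n R e.1 e.2) a b
        = cc n ℓ p X e.1 e.2 * (fg n e.1 a * fg n e.2 b) := by
      intro e; rw [Matrix.smul_apply, smul_eq_mul]; rfl
    rw [Finset.sum_congr rfl fun e _ => hterm e]
    rw [← expand_sum n hn ℓ p X a b]
    exact Fintype.sum_prod_type _
  · intro e _ he
    rw [mem_offEdges] at he
    push_neg at he
    by_cases h1 : e.1 = e.2
    · rw [← h1, cc_diag, zero_smul]
    · obtain ⟨h2, h3⟩ := he h1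
      rw [← h3, cc_tree n ℓ p X hpl hpn e.2 h2, zero_smul]


lemma arbEdges_ne {n : ℕ} {ℓ : Fin n} {p : Fin n → Fin n} (hp : p ∈ arbs n ℓ)
    {e : Fin n × Fin n} (he : e ∈ arbEdges n ℓ p) : e.1 ≠ e.2 := by
  rw [mem_arbEdges] at he
  rw [← he.2]
  exact arb_ne hp he.1

lemma offEdges_ne {n : ℕ} {ℓ : Fin n} {p : Fin n → Fin n}
    {e : Fin n × Fin n} (he : e ∈ offEdges n ℓ p) : e.1 ≠ e.2 :=
  (mem_offEdges.mp he).1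

lemma offEdges_eq_sdiff (n : ℕ) (ℓ : Fin n) (p : Fin n → Fin n) :
    offEdges n ℓ p
      = (univ.filter fun e : Fin n × Fin n => e.1 ≠ e.2) \ arbEdges n ℓ p := by
  ext e
  simp only [mem_offEdges, Finset.mem_sdiff, Finset.mem_filter, Finset.mem_univ,
    true_and, mem_arbEdges]

lemma card_full_add (n : ℕ) :
    (univ.filter fun e : Fin n × Fin n => e.1 ≠ e.2).card + n = n * n := by
  have himg : (univ.filter fun e : Fin n × Fin n => e.1 = e.2)
      = univ.image (fun i : Fin n => (i, i)) := by
    ext ⟨x, y⟩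
    simp only [Finset.mem_filter, Finset.mem_univ, true_and, Finset.mem_image,
      Prod.mk.injEq]
    constructor
    · rintro rfl
      exact ⟨x, rfl, rfl⟩
    · rintro ⟨i, rfl, rfl⟩
      rfl
  have hcard : (univ.filter fun e : Fin n × Fin n => e.1 = e.2).card = n := by
    rw [himg, Finset.card_image_of_injective _ (fun a b h => (Prod.ext_iff.mp h).1)]
    simp
  have hsd : (univ.filter fun e : Fin n × Fin n => e.1 ≠ e.2)
      = univ \ (univ.filter fun e : Fin n × Fin n => e.1 = e.2) := by
    ext e
    simp
  rw [hsd, Finset.card_sdiff_of_subset (Finset.filter_subset _ _), hcard]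
  have hu : (univ : Finset (Fin n × Fin n)).card = n * n := by
    simp [Finset.card_univ]
  rw [hu]
  have hle : n ≤ n * n := by
    rcases Nat.eq_zero_or_pos n with h | h
    · simp [h]
    · exact Nat.le_mul_of_pos_left n h
  generalize n * n = t at hle ⊢
  omega

lemma card_arbEdges {n : ℕ} {ℓ : Fin n} {p : Fin n → Fin n} (hp : p ∈ arbs n ℓ) :
    (arbEdges n ℓ p).card = n - 1 := by
  have himg : arbEdges n ℓ p = (univ.erase ℓ).image (fun v => (p v, v)) := by
    ext e
    simp only [mem_arbEdges, Finset.mem_image, Finset.mem_erase, Finset.mem_univ,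
      and_true]
    constructor
    · intro h
      exact ⟨e.2, h.1, by rw [h.2]⟩
    · rintro ⟨v, hv, rfl⟩
      exact ⟨hv, rfl⟩
  rw [himg, Finset.card_image_of_injOn (fun a _ b _ h => (Prod.ext_iff.mp h).2)]
  rw [Finset.card_erase_of_mem (Finset.mem_univ ℓ)]
  simp

lemma card_offEdges {n : ℕ} {ℓ : Fin n} {p : Fin n → Fin n} (hn : 1 ≤ n)
    (hp : p ∈ arbs n ℓ) : (offEdges n ℓ p).card = (n - 1) * (n - 1) := by
  have hsub : arbEdges n ℓ p ⊆ (univ.filter fun e : Fin n × Fin n => e.1 ≠ e.2) := by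
    intro e he
    simp only [Finset.mem_filter, Finset.mem_univ, true_and]
    exact arbEdges_ne hp he
  have h1 : (offEdges n ℓ p).card
      = (univ.filter fun e : Fin n × Fin n => e.1 ≠ e.2).card
        - (arbEdges n ℓ p).card := by
    rw [offEdges_eq_sdiff, Finset.card_sdiff_of_subset hsub]
  rw [card_arbEdges hp] at h1
  have h2 := card_full_add n
  obtain ⟨m, rfl⟩ : ∃ m, n = m + 1 := ⟨n - 1, by omega⟩
  have h3 : (m + 1) * (m + 1) = m * m + 2 * m + 1 := by ring
  rw [h3] at h2
  have h4 : ((m + 1) - 1) * ((m + 1) - 1) = m * m := by simp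
  rw [h4]
  generalize m * m = t at h2 ⊢
  omega

section LM

variable (n : ℕ) (ℓ : Fin n) (p : Fin n → Fin n)

noncomputable def Lmap (R : Type*) [CommRing R] :
    ({e : Fin n × Fin n // e ∈ offEdges n ℓ p} → R)
      →ₗ[R] Matrix (Fin (n - 1)) (Fin (n - 1)) R :=
  Fintype.linearCombination R fun e : {e : Fin n × Fin n // e ∈ offEdges n ℓ p} =>
    Mg n R e.1.1 e.1.2

lemma Lmap_apply (R : Type*) [CommRing R]
    (c : {e : Fin n × Fin n // e ∈ offEdges n ℓ p} → R) :
    Lmap n ℓ p R c = ∑ e : {e : Fin n × Fin n // e ∈ offEdges n ℓ p},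
      c e • Mg n R e.1.1 e.1.2 := by
  simp [Lmap, Fintype.linearCombination_apply]

lemma Lmap_cc (R : Type*) [CommRing R] (hn : 1 ≤ n) (hp : p ∈ arbs n ℓ)
    (X : Matrix (Fin (n - 1)) (Fin (n - 1)) R) :
    Lmap n ℓ p R (fun e => cc n ℓ p X e.1.1 e.1.2) = X := by
  rw [Lmap_apply]
  exact (Finset.sum_coe_sort (offEdges n ℓ p)
    (fun e => cc n ℓ p X e.1 e.2 • Mg n R e.1 e.2)).trans
    (main_identity n hn ℓ p hp X)

lemma Lmap_surj (R : Type*) [CommRing R] (hn : 1 ≤ n) (hp : p ∈ arbs n ℓ) :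
    Function.Surjective (Lmap n ℓ p R) := fun X =>
  ⟨fun e => cc n ℓ p X e.1.1 e.1.2, Lmap_cc n ℓ p R hn hp X⟩

def matEquiv (R : Type*) [CommRing R] (m m' : ℕ) :
    Matrix (Fin m) (Fin m') R ≃ₗ[R] (Fin m × Fin m' → R) where
  toFun := fun X e => X e.1 e.2
  map_add' := fun X Y => rfl
  map_smul' := fun s X => rfl
  invFun := fun c => Matrix.of fun a b => c (a, b)
  left_inv := fun X => rfl
  right_inv := fun c => by funext e; cases e; rfl

lemma Lmap_inj (R : Type*) [CommRing R] (hn : 1 ≤ n) (hp : p ∈ arbs n ℓ) :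
    Function.Injective (Lmap n ℓ p R) := by
  have hcard : Fintype.card {e : Fin n × Fin n // e ∈ offEdges n ℓ p}
      = Fintype.card (Fin (n - 1) × Fin (n - 1)) := by
    simp [Fintype.card_coe, card_offEdges hn hp, Fintype.card_prod]
  let eqv : {e : Fin n × Fin n // e ∈ offEdges n ℓ p} ≃ (Fin (n - 1) × Fin (n - 1)) :=
    Fintype.equivOfCardEq hcard
  let E : Matrix (Fin (n - 1)) (Fin (n - 1)) R
      ≃ₗ[R] ({e : Fin n × Fin n // e ∈ offEdges n ℓ p} → R) :=
    matEquiv R (n - 1) (n - 1) ≪≫ₗ LinearEquiv.funCongrLeft R R eqv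
  let h : ({e : Fin n × Fin n // e ∈ offEdges n ℓ p} → R)
      →ₗ[R] ({e : Fin n × Fin n // e ∈ offEdges n ℓ p} → R) :=
    E.toLinearMap ∘ₗ Lmap n ℓ p R
  have hs : Function.Surjective h :=
    E.surjective.comp (Lmap_surj n ℓ p R hn hp)
  have hi : Function.Injective h :=
    OrzechProperty.injective_of_surjective_endomorphism h hs
  intro x y hxy
  apply hi
  show E (Lmap n ℓ p R x) = E (Lmap n ℓ p R y)
  rw [hxy]

lemma Lmap_single (R : Type*) [CommRing R]
    (e : {e : Fin n × Fin n // e ∈ offEdges n ℓ p}) :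
    Lmap n ℓ p R (Pi.single e 1) = Mg n R e.1.1 e.1.2 := by
  rw [Lmap_apply]
  rw [Finset.sum_eq_single e]
  · simp
  · intro b _ hb
    rw [Pi.single_eq_of_ne hb, zero_smul]
  · intro h
    exact absurd (Finset.mem_univ e) h

lemma cc_single (R : Type*) [CommRing R] (hn : 1 ≤ n) (hp : p ∈ arbs n ℓ)
    (e' : {e : Fin n × Fin n // e ∈ offEdges n ℓ p}) :
    (fun e : {e : Fin n × Fin n // e ∈ offEdges n ℓ p} =>
      cc n ℓ p (Mg n R e'.1.1 e'.1.2) e.1.1 e.1.2) = Pi.single e' 1 := by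
  apply Lmap_inj n ℓ p R hn hp
  rw [Lmap_cc n ℓ p R hn hp, Lmap_single]

lemma part_a {n : ℕ} {ℓ : Fin n} {p : Fin n → Fin n} (hn : 1 ≤ n) (hp : p ∈ arbs n ℓ) :
    ∃ b : Module.Basis {e : Fin n × Fin n // e ∈ offEdges n ℓ p} ℤ
      (Matrix (Fin (n - 1)) (Fin (n - 1)) ℤ),
      ∀ e, b e = MbarZ n e.1.1 e.1.2 := by
  have hbij : Function.Bijective (Lmap n ℓ p ℤ) :=
    ⟨Lmap_inj n ℓ p ℤ hn hp, Lmap_surj n ℓ p ℤ hn hp⟩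
  refine ⟨(Pi.basisFun ℤ _).map (LinearEquiv.ofBijective _ hbij), fun e => ?_⟩
  rw [Module.Basis.map_apply, Pi.basisFun_apply, LinearEquiv.ofBijective_apply,
    Lmap_single, MbarZ_eq_Mg n e.1.1 e.1.2 (offEdges_ne e.2)]

end LM


section Linearity

lemma xh_add (n : ℕ) (X Y : Matrix (Fin (n - 1)) (Fin (n - 1)) R) (i j : Fin n) :
    xh n (X + Y) i j = xh n X i j + xh n Y i j := by
  unfold xh
  split
  · rfl
  · simp

lemma xh_smul (n : ℕ) (s : R) (X : Matrix (Fin (n - 1)) (Fin (n - 1)) R) (i j : Fin n) :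
    xh n (s • X) i j = s * xh n X i j := by
  unfold xh
  split
  · rfl
  · simp

lemma dl_add (n : ℕ) (ℓ : Fin n) (p : Fin n → Fin n)
    (X Y : Matrix (Fin (n - 1)) (Fin (n - 1)) R) (v : Fin n) :
    dl n ℓ p (X + Y) v = dl n ℓ p X v + dl n ℓ p Y v := by
  unfold dl
  split
  · simp
  · rw [xh_add, xh_add]
    ring

lemma dl_smul (n : ℕ) (ℓ : Fin n) (p : Fin n → Fin n) (s : R)
    (X : Matrix (Fin (n - 1)) (Fin (n - 1)) R) (v : Fin n) :
    dl n ℓ p (s • X) v = s * dl n ℓ p X v := by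
  unfold dl
  split
  · simp
  · rw [xh_smul, xh_smul]
    ring

lemma rr_add (n : ℕ) (ℓ : Fin n) (p : Fin n → Fin n)
    (X Y : Matrix (Fin (n - 1)) (Fin (n - 1)) R) (v : Fin n) :
    rr n ℓ p (X + Y) v = rr n ℓ p X v + rr n ℓ p Y v := by
  unfold rr
  rw [← Finset.sum_add_distrib]
  exact Finset.sum_congr rfl fun k _ => dl_add n ℓ p X Y _

lemma rr_smul (n : ℕ) (ℓ : Fin n) (p : Fin n → Fin n) (s : R)
    (X : Matrix (Fin (n - 1)) (Fin (n - 1)) R) (v : Fin n) :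
    rr n ℓ p (s • X) v = s * rr n ℓ p X v := by
  unfold rr
  rw [Finset.mul_sum]
  exact Finset.sum_congr rfl fun k _ => dl_smul n ℓ p s X _

lemma cc_add (n : ℕ) (ℓ : Fin n) (p : Fin n → Fin n)
    (X Y : Matrix (Fin (n - 1)) (Fin (n - 1)) R) (i j : Fin n) :
    cc n ℓ p (X + Y) i j = cc n ℓ p X i j + cc n ℓ p Y i j := by
  unfold cc
  rw [xh_add, xh_add, rr_add, rr_add]
  ring

lemma cc_smul (n : ℕ) (ℓ : Fin n) (p : Fin n → Fin n) (s : R)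
    (X : Matrix (Fin (n - 1)) (Fin (n - 1)) R) (i j : Fin n) :
    cc n ℓ p (s • X) i j = s * cc n ℓ p X i j := by
  unfold cc
  rw [xh_smul, xh_smul, rr_smul, rr_smul]
  ring

end Linearity

section RealPart

/-- The coordinate functional w.r.t. the arborescence `p`, as a linear map. -/
noncomputable def phiF (n : ℕ) (ℓ : Fin n) (p : Fin n → Fin n) (i j : Fin n) :
    Matrix (Fin (n - 1)) (Fin (n - 1)) ℝ →ₗ[ℝ] ℝ where
  toFun := fun X => cc n ℓ p X i j
  map_add' := fun X Y => cc_add n ℓ p X Y i j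
  map_smul' := fun s X => by simpa using cc_smul n ℓ p s X i j

lemma cc_of_combination (n : ℕ) (hn : 1 ≤ n) (ℓ : Fin n) (p : Fin n → Fin n)
    (hp : p ∈ arbs n ℓ) (lam : {e : Fin n × Fin n // e ∈ offEdges n ℓ p} → ℝ)
    (e : {e : Fin n × Fin n // e ∈ offEdges n ℓ p}) :
    cc n ℓ p (∑ k : {e : Fin n × Fin n // e ∈ offEdges n ℓ p},
      lam k • Mbar n k.1.1 k.1.2) e.1.1 e.1.2 = lam e := by
  have h1 : (∑ k : {e : Fin n × Fin n // e ∈ offEdges n ℓ p},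
      lam k • Mbar n k.1.1 k.1.2) = Lmap n ℓ p ℝ lam := by
    rw [Lmap_apply]
    exact Finset.sum_congr rfl fun k _ => by
      try dsimp only
      rw [Mbar_eq_Mg n k.1.1 k.1.2 (offEdges_ne k.2)]
  rw [h1]
  have h2 := Lmap_inj n ℓ p ℝ hn hp (Lmap_cc n ℓ p ℝ hn hp (Lmap n ℓ p ℝ lam))
  exact congrFun h2 e

lemma coord_nonneg (n : ℕ) (hn : 1 ≤ n) (ℓ : Fin n) (p : Fin n → Fin n)
    (hp : p ∈ arbs n ℓ) (x : Matrix (Fin (n - 1)) (Fin (n - 1)) ℝ)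
    (hx : x ∈ coneOf fun e : {e : Fin n × Fin n // e ∈ offEdges n ℓ p} =>
      Mbar n e.1.1 e.1.2)
    (e : {e : Fin n × Fin n // e ∈ offEdges n ℓ p}) :
    0 ≤ cc n ℓ p x e.1.1 e.1.2 := by
  obtain ⟨lam, hlam, rfl⟩ := hx
  rw [cc_of_combination n hn ℓ p hp lam e]
  exact hlam e

lemma coord_pos_of_interior (n : ℕ) (hn : 1 ≤ n) (ℓ : Fin n) (p : Fin n → Fin n)
    (hp : p ∈ arbs n ℓ) (x : Matrix (Fin (n - 1)) (Fin (n - 1)) ℝ)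
    (hx : x ∈ interior (coneOf fun e : {e : Fin n × Fin n // e ∈ offEdges n ℓ p} =>
      Mbar n e.1.1 e.1.2))
    (e : {e : Fin n × Fin n // e ∈ offEdges n ℓ p}) :
    0 < cc n ℓ p x e.1.1 e.1.2 := by
  have hmem : x ∈ coneOf fun e : {e : Fin n × Fin n // e ∈ offEdges n ℓ p} =>
      Mbar n e.1.1 e.1.2 := interior_subset hx
  rcases (coord_nonneg n hn ℓ p hp x hmem e).lt_or_eq with h | h
  · exact h
  exfalso
  set M0 := Mbar n e.1.1 e.1.2 with hM0
  have hcont : Continuous (fun t : ℝ => x - t • M0) := by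
    exact continuous_const.sub (continuous_id.smul continuous_const)
  have hnh : (fun t : ℝ => x - t • M0) ⁻¹'
      (interior (coneOf fun e : {e : Fin n × Fin n // e ∈ offEdges n ℓ p} =>
        Mbar n e.1.1 e.1.2)) ∈ nhds (0 : ℝ) := by
    apply hcont.continuousAt.preimage_mem_nhds
    apply isOpen_interior.mem_nhds
    simpa using hx
  obtain ⟨ε, hε, hball⟩ := Metric.mem_nhds_iff.mp hnh
  have hballmem : (ε / 2 : ℝ) ∈ Metric.ball (0 : ℝ) ε := by
    rw [Metric.mem_ball, Real.dist_eq]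
    rw [abs_of_pos (by linarith)]
    linarith
  have hmem2 : x - (ε / 2) • M0 ∈ coneOf
      fun e : {e : Fin n × Fin n // e ∈ offEdges n ℓ p} => Mbar n e.1.1 e.1.2 :=
    interior_subset (hball hballmem)
  have hval := coord_nonneg n hn ℓ p hp _ hmem2 e
  have hlin : cc n ℓ p (x - (ε / 2) • M0) e.1.1 e.1.2
      = cc n ℓ p x e.1.1 e.1.2 - (ε / 2) * cc n ℓ p M0 e.1.1 e.1.2 := by
    have := map_sub (phiF n ℓ p e.1.1 e.1.2) x ((ε / 2) • M0)
    have h2 := map_smul (phiF n ℓ p e.1.1 e.1.2) (ε / 2) M0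
    simp only [phiF, LinearMap.coe_mk, AddHom.coe_mk, smul_eq_mul] at this h2
    rw [this, h2]
  have hone : cc n ℓ p M0 e.1.1 e.1.2 = 1 := by
    rw [hM0, Mbar_eq_Mg n e.1.1 e.1.2 (offEdges_ne e.2)]
    have := congrFun (cc_single (R := ℝ) n ℓ p hn hp e) e
    rw [this, Pi.single_eq_same]
  rw [hlin, hone, ← h] at hval
  linarith

end RealPart

section Kernel

lemma kernel_rep (n : ℕ) (hn : 1 ≤ n) (lam : Fin n × Fin n → ℝ)
    (hdiag : ∀ i, lam (i, i) = 0)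
    (hzero : ∑ e : Fin n × Fin n, lam e • Mg n ℝ e.1 e.2 = 0) :
    ∀ i j : Fin n, lam (i, j)
      = (if (i : ℕ) = n - 1 then 0 else lam (i, lst n hn))
        - (if (j : ℕ) = n - 1 then 0 else lam (j, lst n hn)) := by
  have key : ∀ a b : Fin (n - 1),
      lam (emb a, emb b) = lam (emb a, lst n hn) + lam (lst n hn, emb b) := by
    intro a b
    have h0 : (∑ e : Fin n × Fin n, lam e • Mg n ℝ e.1 e.2) a b = 0 := by
      rw [hzero]; rfl
    rw [Matrix.sum_apply] at h0
    have hterm : ∀ e : Fin n × Fin n, (lam e • Mg n ℝ e.1 e.2) a b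
        = lam e * (fg n e.1 a * fg n e.2 b) := fun e => by
      rw [Matrix.smul_apply, smul_eq_mul]; rfl
    rw [Finset.sum_congr rfl fun e _ => hterm e, Fintype.sum_prod_type] at h0
    have hinner : ∀ i : Fin n, ∑ j : Fin n, lam (i, j) * (fg n i a * fg n j b)
        = (lam (i, emb b) - lam (i, lst n hn)) * fg n i a := by
      intro i
      have : ∑ j : Fin n, lam (i, j) * (fg n i a * fg n j b)
          = ∑ j : Fin n, (lam (i, j) * fg n i a) * fg n j b :=
        Finset.sum_congr rfl fun j _ => by ring
      rw [this, sum_fg_right n (fun j => lam (i, j) * fg n i a) b (emb b) (lst n hn)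
        rfl rfl]
      ring
    rw [Finset.sum_congr rfl fun i _ => hinner i] at h0
    rw [sum_fg_right n (fun i => lam (i, emb b) - lam (i, lst n hn)) a (emb a)
      (lst n hn) rfl rfl] at h0
    have hd : lam (lst n hn, lst n hn) = 0 := hdiag _
    have := h0
    rw [hd] at this
    linarith
  have hneg : ∀ b : Fin (n - 1), lam (lst n hn, emb b) = - lam (emb b, lst n hn) := by
    intro b
    have := key b b
    rw [hdiag (emb b)] at this
    linarith
  intro i j
  by_cases hi : (i : ℕ) = n - 1
  · have hi' : i = lst n hn := Fin.ext hi
    by_cases hj : (j : ℕ) = n - 1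
    · have hj' : j = lst n hn := Fin.ext hj
      rw [hi', hj', hdiag]
      simp
    · have hjlt : (j : ℕ) < n - 1 := by have := j.isLt; omega
      have hj' : j = emb (⟨(j : ℕ), hjlt⟩ : Fin (n - 1)) := Fin.ext rfl
      rw [if_pos hi, if_neg hj, hi', hj', hneg]
      rw [← hj']
      ring
  · have hilt : (i : ℕ) < n - 1 := by have := i.isLt; omega
    have hi' : i = emb (⟨(i : ℕ), hilt⟩ : Fin (n - 1)) := Fin.ext rfl
    by_cases hj : (j : ℕ) = n - 1
    · have hj' : j = lst n hn := Fin.ext hj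
      rw [if_neg hi, if_pos hj, hi', hj']
      ring
    · have hjlt : (j : ℕ) < n - 1 := by have := j.isLt; omega
      have hj' : j = emb (⟨(j : ℕ), hjlt⟩ : Fin (n - 1)) := Fin.ext rfl
      rw [if_neg hi, if_neg hj]
      rw [hi', hj', key]
      rw [hneg]
      rw [← hi', ← hj']
      ring

end Kernel


section Dijkstra

/-- Invariant for the Dijkstra-style construction of a shortest-path arborescence. -/
def dInv (n : ℕ) (ℓ : Fin n) (Λ : Fin n × Fin n → ℝ) (S : Finset (Fin n))
    (r : Fin n → ℝ) (p : Fin n → Fin n) : Prop :=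
  p ℓ = ℓ ∧ (∀ v ∈ S, p v ∈ S) ∧
    (∀ v ∈ S, ∃ k, k + 1 ≤ S.card ∧ p^[k] v = ℓ) ∧
    (∀ v ∈ S, v ≠ ℓ → p v ≠ v ∧ r v = r (p v) + Λ (p v, v)) ∧
    (∀ i ∈ S, ∀ j ∈ S, r j ≤ r i + Λ (i, j)) ∧
    (∀ j ∈ S, ∀ i ∈ S, ∀ j', j' ∉ S → r j ≤ r i + Λ (i, j'))

lemma dStep {n : ℕ} {ℓ : Fin n} {Λ : Fin n × Fin n → ℝ} (hΛ : ∀ e, 0 ≤ Λ e)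
    (S : Finset (Fin n)) (hS : ℓ ∈ S) (hne : S ≠ univ)
    (r : Fin n → ℝ) (p : Fin n → Fin n) (h : dInv n ℓ Λ S r p) :
    ∃ j₀, j₀ ∉ S ∧ ∃ r' p', dInv n ℓ Λ (insert j₀ S) r' p' := by
  obtain ⟨hpl, hcl, hreach, htight, htri, hfront⟩ := h
  have hcompl : (univ \ S).Nonempty := by
    rw [Finset.sdiff_nonempty]
    intro hsub
    exact hne (Finset.univ_subset_iff.mp hsub)
  obtain ⟨w, hw⟩ := hcompl
  have hprod : (S ×ˢ (univ \ S)).Nonempty :=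
    ⟨(ℓ, w), Finset.mem_product.mpr ⟨hS, hw⟩⟩
  obtain ⟨e₀, he₀, hmin⟩ := Finset.exists_min_image _ (fun e => r e.1 + Λ e) hprod
  obtain ⟨i₀, j₀⟩ := e₀
  obtain ⟨hi₀, hj₀⟩ := Finset.mem_product.mp he₀
  have hi₀' : i₀ ∈ S := hi₀
  have hj₀S : j₀ ∉ S := (Finset.mem_sdiff.mp hj₀).2
  have hij : i₀ ≠ j₀ := by
    intro hh
    rw [hh] at hi₀'
    exact hj₀S hi₀'
  have hℓj : ℓ ≠ j₀ := by
    intro hh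
    rw [hh] at hS
    exact hj₀S hS
  refine ⟨j₀, hj₀S, Function.update r j₀ (r i₀ + Λ (i₀, j₀)),
    Function.update p j₀ i₀, ?_⟩
  set r' := Function.update r j₀ (r i₀ + Λ (i₀, j₀)) with hr'def
  set p' := Function.update p j₀ i₀ with hp'def
  have hr' : ∀ v ∈ S, r' v = r v := by
    intro v hv
    have hvne : v ≠ j₀ := by
      intro hh
      rw [hh] at hv
      exact hj₀S hv
    exact Function.update_of_ne hvne _ r
  have hrj : r' j₀ = r i₀ + Λ (i₀, j₀) := Function.update_self _ _ _
  have hp' : ∀ v ∈ S, p' v = p v := by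
    intro v hv
    have hvne : v ≠ j₀ := by
      intro hh
      rw [hh] at hv
      exact hj₀S hv
    exact Function.update_of_ne hvne _ p
  have hpj : p' j₀ = i₀ := Function.update_self _ _ _
  have hminS : ∀ i ∈ S, ∀ j', j' ∉ S → r i₀ + Λ (i₀, j₀) ≤ r i + Λ (i, j') :=
    fun i hi j' hj' => hmin (i, j')
      (Finset.mem_product.mpr ⟨hi, Finset.mem_sdiff.mpr ⟨Finset.mem_univ _, hj'⟩⟩)
  have hfrj : ∀ j ∈ S, r j ≤ r i₀ + Λ (i₀, j₀) :=
    fun j hj => hfront j hj i₀ hi₀' j₀ hj₀S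
  have hiter : ∀ k, ∀ v ∈ S, p'^[k] v = p^[k] v ∧ p^[k] v ∈ S := by
    intro k
    induction k with
    | zero => exact fun v hv => ⟨rfl, hv⟩
    | succ k ih =>
      intro v hv
      have hpv : p' v = p v := hp' v hv
      have hpvS : p v ∈ S := hcl v hv
      obtain ⟨ih1, ih2⟩ := ih (p v) hpvS
      refine ⟨?_, ?_⟩
      · rw [Function.iterate_succ_apply, Function.iterate_succ_apply, hpv, ih1]
      · rw [Function.iterate_succ_apply]
        exact ih2
  have hpℓ' : p' ℓ = ℓ := by rw [hp' ℓ hS, hpl]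
  refine ⟨hpℓ', ?_, ?_, ?_, ?_, ?_⟩
  · intro v hv
    rcases Finset.mem_insert.mp hv with hv1 | hv2
    · subst hv1
      rw [hpj]
      exact Finset.mem_insert_of_mem hi₀'
    · rw [hp' v hv2]
      exact Finset.mem_insert_of_mem (hcl v hv2)
  · intro v hv
    have hcard : (insert j₀ S).card = S.card + 1 := Finset.card_insert_of_notMem hj₀S
    rcases Finset.mem_insert.mp hv with hv1 | hv2
    · subst hv1
      obtain ⟨k, hk1, hk2⟩ := hreach i₀ hi₀'
      refine ⟨k + 1, by omega, ?_⟩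
      rw [Function.iterate_succ_apply, hpj, (hiter k i₀ hi₀').1, hk2]
    · obtain ⟨k, hk1, hk2⟩ := hreach v hv2
      exact ⟨k, by omega, by rw [(hiter k v hv2).1, hk2]⟩
  · intro v hv hvℓ
    rcases Finset.mem_insert.mp hv with hv1 | hv2
    · subst hv1
      refine ⟨by rw [hpj]; exact hij, ?_⟩
      rw [hpj, hrj, hr' i₀ hi₀']
    · obtain ⟨h1, h2⟩ := htight v hv2 hvℓ
      rw [hp' v hv2, hr' v hv2, hr' (p v) (hcl v hv2)]
      exact ⟨h1, h2⟩
  · intro i hi j hj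
    rcases Finset.mem_insert.mp hi with hi1 | hi2
    · rcases Finset.mem_insert.mp hj with hj1 | hj2
      · rw [hi1, hj1]
        have := hΛ (j₀, j₀)
        linarith
      · rw [hi1, hr' j hj2]
        have h1 : r j ≤ r i₀ + Λ (i₀, j₀) := hfrj j hj2
        have h2 := hΛ (j₀, j)
        rw [← hrj] at h1
        linarith
    · rcases Finset.mem_insert.mp hj with hj1 | hj2
      · rw [hj1, hrj, hr' i hi2]
        exact hminS i hi2 j₀ hj₀S
      · rw [hr' i hi2, hr' j hj2]
        exact htri i hi2 j hj2
  · intro j hj i hi j' hj'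
    have hj'S : j' ∉ S := fun hh => hj' (Finset.mem_insert_of_mem hh)
    rcases Finset.mem_insert.mp hj with hj1 | hj2
    · rcases Finset.mem_insert.mp hi with hi1 | hi2
      · rw [hj1, hi1]
        have := hΛ (j₀, j')
        linarith
      · rw [hj1, hrj, hr' i hi2]
        exact hminS i hi2 j' hj'S
    · rcases Finset.mem_insert.mp hi with hi1 | hi2
      · rw [hr' j hj2, hi1, hrj]
        have h1 : r j ≤ r i₀ + Λ (i₀, j₀) := hfrj j hj2
        have h2 := hΛ (j₀, j')
        linarith
      · rw [hr' j hj2, hr' i hi2]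
        exact hfront j hj2 i hi2 j' hj'S

lemma dGrow {n : ℕ} {ℓ : Fin n} {Λ : Fin n × Fin n → ℝ} (hΛ : ∀ e, 0 ≤ Λ e) :
    ∀ m (S : Finset (Fin n)), ℓ ∈ S → S.card + m = n →
      (∃ r p, dInv n ℓ Λ S r p) → ∃ r p, dInv n ℓ Λ univ r p := by
  intro m
  induction m with
  | zero =>
    intro S hS hcard h
    have : S = univ := Finset.eq_univ_of_card S (by simpa using hcard)
    rwa [this] at h
  | succ m ih =>
    intro S hS hcard ⟨r, p, h⟩
    have hne : S ≠ univ := by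
      intro heq
      rw [heq, Finset.card_univ, Fintype.card_fin] at hcard
      omega
    obtain ⟨j₀, hj₀, r', p', h'⟩ := dStep hΛ S hS hne r p h
    exact ih (insert j₀ S) (Finset.mem_insert_of_mem hS)
      (by rw [Finset.card_insert_of_notMem hj₀]; omega) ⟨r', p', h'⟩

lemma dijkstra (n : ℕ) (hn : 1 ≤ n) (ℓ : Fin n) (Λ : Fin n × Fin n → ℝ)
    (hΛ : ∀ e, 0 ≤ Λ e) :
    ∃ (r : Fin n → ℝ) (p : Fin n → Fin n), p ∈ arbs n ℓ ∧
      (∀ i j : Fin n, r j ≤ r i + Λ (i, j)) ∧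
      (∀ v, v ≠ ℓ → p v ≠ v ∧ r v = r (p v) + Λ (p v, v)) := by
  have hbase : ∃ r p, dInv n ℓ Λ {ℓ} r p := by
    refine ⟨fun _ => 0, id, rfl, ?_, ?_, ?_, ?_, ?_⟩
    · intro v hv
      simpa using hv
    · intro v hv
      rw [Finset.mem_singleton] at hv
      exact ⟨0, by simp, by simpa using hv⟩
    · intro v hv hvℓ
      rw [Finset.mem_singleton] at hv
      exact absurd hv hvℓ
    · intro i _ j _
      have := hΛ (i, j)
      simpa using this
    · intro j _ i _ j' _
      have := hΛ (i, j')
      simpa using this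
  obtain ⟨r, p, hpl, hcl, hreach, htight, htri, hfront⟩ :=
    dGrow hΛ (n - 1) {ℓ} (Finset.mem_singleton_self ℓ) (by simp; omega) hbase
  refine ⟨r, p, ?_, ?_, ?_⟩
  · rw [mem_arbs_iff]
    refine ⟨hpl, fun v => ?_⟩
    obtain ⟨k, hk1, hk2⟩ := hreach v (Finset.mem_univ v)
    have : n = (n - k) + k := by
      rw [Finset.card_univ, Fintype.card_fin] at hk1
      omega
    have h2 : p^[(n - k) + k] v = ℓ := by
      rw [Function.iterate_add_apply, hk2, Function.iterate_fixed hpl]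
    rwa [show n - k + k = n from by omega] at h2
  · intro i j
    exact htri i (Finset.mem_univ i) j (Finset.mem_univ j)
  · intro v hv
    exact htight v (Finset.mem_univ v) hv

end Dijkstra


section Assembly

lemma kernel_mat (n : ℕ) (hn : 1 ≤ n) (r : Fin n → ℝ) :
    ∑ e : Fin n × Fin n, (r e.1 - r e.2) • Mg n ℝ e.1 e.2 = 0 := by
  ext a b
  rw [Matrix.sum_apply]
  have hterm : ∀ e : Fin n × Fin n, ((r e.1 - r e.2) • Mg n ℝ e.1 e.2) a b
      = (r e.1 - r e.2) * (fg n e.1 a * fg n e.2 b) := fun e => by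
    rw [Matrix.smul_apply, smul_eq_mul]; rfl
  rw [Finset.sum_congr rfl fun e _ => hterm e, Fintype.sum_prod_type]
  have := kernel_sum n hn r a b
  rw [this]
  rfl

lemma sum_dite_mem (n : ℕ) (ℓ : Fin n) (p : Fin n → Fin n)
    (g : {e : Fin n × Fin n // e ∈ offEdges n ℓ p} → ℝ) :
    ∑ e : Fin n × Fin n, (if h : e ∈ offEdges n ℓ p then g ⟨e, h⟩ else 0)
        • Mg n ℝ e.1 e.2
      = ∑ k : {e : Fin n × Fin n // e ∈ offEdges n ℓ p}, g k • Mg n ℝ k.1.1 k.1.2 := by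
  rw [← Finset.sum_subset (Finset.subset_univ (offEdges n ℓ p))
    (fun e _ he => by rw [dif_neg he, zero_smul])]
  rw [← Finset.sum_coe_sort (offEdges n ℓ p)
    (fun e => (if h : e ∈ offEdges n ℓ p then g ⟨e, h⟩ else 0) • Mg n ℝ e.1 e.2)]
  exact Finset.sum_congr rfl fun i _ => by rw [dif_pos i.2]

lemma sum_dite_ne (n : ℕ) (g : {e : Fin n × Fin n // e.1 ≠ e.2} → ℝ) :
    ∑ e : Fin n × Fin n, (if h : e.1 ≠ e.2 then g ⟨e, h⟩ else 0) • Mg n ℝ e.1 e.2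
      = ∑ k : {e : Fin n × Fin n // e.1 ≠ e.2}, g k • Mg n ℝ k.1.1 k.1.2 := by
  rw [← Finset.sum_subset
    (Finset.subset_univ (univ.filter fun e : Fin n × Fin n => e.1 ≠ e.2))
    (fun e _ he => by
      have : ¬ e.1 ≠ e.2 := by
        intro hne
        exact he (Finset.mem_filter.mpr ⟨Finset.mem_univ _, hne⟩)
      rw [dif_neg this, zero_smul])]
  rw [Finset.sum_subtype (p := fun e : Fin n × Fin n => e.1 ≠ e.2)
    (univ.filter fun e : Fin n × Fin n => e.1 ≠ e.2)
    (fun e => by simp)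
    (fun e => (if h : e.1 ≠ e.2 then g ⟨e, h⟩ else 0) • Mg n ℝ e.1 e.2)]
  exact Finset.sum_congr rfl fun i _ => by rw [dif_pos i.2]

lemma part_b (n : ℕ) (hn : 2 ≤ n) (ℓ : Fin n) :
    (⋃ p ∈ arbs n ℓ,
        coneOf fun e : {e : Fin n × Fin n // e ∈ offEdges n ℓ p} => Mbar n e.1.1 e.1.2)
      = coneOf fun e : {e : Fin n × Fin n // e.1 ≠ e.2} => Mbar n e.1.1 e.1.2 := by
  have hn1 : 1 ≤ n := by omega
  apply Set.Subset.antisymm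
  · intro x hx
    rw [Set.mem_iUnion₂] at hx
    obtain ⟨p, hp, hxc⟩ := hx
    obtain ⟨lam, hlam, rfl⟩ := hxc
    have hsub : offEdges n ℓ p ⊆ (univ.filter fun e : Fin n × Fin n => e.1 ≠ e.2) :=
      fun e he => Finset.mem_filter.mpr ⟨Finset.mem_univ _, offEdges_ne he⟩
    refine ⟨fun k => if h : (k : Fin n × Fin n) ∈ offEdges n ℓ p then lam ⟨k.1, h⟩ else 0,
      fun k => ?_, ?_⟩
    · by_cases h : (k : Fin n × Fin n) ∈ offEdges n ℓ p
      · simp only [dif_pos h]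
        exact hlam _
      · simp only [dif_neg h]
        exact le_refl 0
    · refine Eq.symm ?_
      calc ∑ k : {e : Fin n × Fin n // e.1 ≠ e.2},
            (if h : (k : Fin n × Fin n) ∈ offEdges n ℓ p then lam ⟨k.1, h⟩ else 0)
              • Mbar n k.1.1 k.1.2
          = ∑ e ∈ (univ.filter fun e : Fin n × Fin n => e.1 ≠ e.2),
              (if h : e ∈ offEdges n ℓ p then lam ⟨e, h⟩ else 0) • Mbar n e.1 e.2 :=
            (Finset.sum_subtype (p := fun e : Fin n × Fin n => e.1 ≠ e.2)
              (univ.filter fun e : Fin n × Fin n => e.1 ≠ e.2) (fun e => by simp)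
              (fun e => (if h : e ∈ offEdges n ℓ p then lam ⟨e, h⟩ else 0)
                • Mbar n e.1 e.2)).symm
        _ = ∑ e ∈ offEdges n ℓ p,
              (if h : e ∈ offEdges n ℓ p then lam ⟨e, h⟩ else 0) • Mbar n e.1 e.2 :=
            (Finset.sum_subset hsub
              (fun e _ he => by rw [dif_neg he, zero_smul])).symm
        _ = ∑ k : {e : Fin n × Fin n // e ∈ offEdges n ℓ p},
              (if h : (k : Fin n × Fin n) ∈ offEdges n ℓ p then lam ⟨k.1, h⟩ else 0)
                • Mbar n k.1.1 k.1.2 :=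
            (Finset.sum_coe_sort (offEdges n ℓ p)
              (fun e => (if h : e ∈ offEdges n ℓ p then lam ⟨e, h⟩ else 0)
                • Mbar n e.1 e.2)).symm
        _ = ∑ k : {e : Fin n × Fin n // e ∈ offEdges n ℓ p},
              lam k • Mbar n k.1.1 k.1.2 :=
            Finset.sum_congr rfl fun k _ => by simp only [dif_pos k.2, Subtype.coe_eta]
  · intro x hx
    obtain ⟨lam, hlam, rfl⟩ := hx
    set Λ : Fin n × Fin n → ℝ :=
      fun e => if h : e.1 ≠ e.2 then lam ⟨e, h⟩ else 0 with hΛdef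
    have hΛ : ∀ e, 0 ≤ Λ e := by
      intro e
      rw [hΛdef]
      dsimp only
      by_cases h : e.1 ≠ e.2
      · rw [dif_pos h]
        exact hlam _
      · rw [dif_neg h]
    obtain ⟨r, p, hp, htri, htight⟩ := dijkstra n hn1 ℓ Λ hΛ
    set μ : Fin n × Fin n → ℝ := fun e => Λ e + r e.1 - r e.2 with hμdef
    have hμnn : ∀ e, 0 ≤ μ e := by
      intro e
      have := htri e.1 e.2
      rw [Prod.mk.eta] at this
      rw [hμdef]
      dsimp only
      linarith
    have hμ0 : ∀ e : Fin n × Fin n, e ∉ offEdges n ℓ p → μ e = 0 := by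
      intro e he
      rw [mem_offEdges] at he
      push_neg at he
      by_cases h1 : e.1 = e.2
      · have hΛe : Λ e = 0 := by
          rw [hΛdef]
          exact dif_neg (fun hne => hne h1)
        rw [hμdef]
        dsimp only
        rw [hΛe, h1]
        ring
      · obtain ⟨h2, h3⟩ := he h1
        have := (htight e.2 h2).2
        rw [h3, Prod.mk.eta] at this
        rw [hμdef]
        dsimp only
        linarith
    have hx1 : ∑ e : Fin n × Fin n, Λ e • Mg n ℝ e.1 e.2
        = ∑ k : {e : Fin n × Fin n // e.1 ≠ e.2}, lam k • Mbar n k.1.1 k.1.2 := by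
      rw [sum_dite_ne n lam]
      exact Finset.sum_congr rfl fun k _ => by
        rw [Mbar_eq_Mg n k.1.1 k.1.2 k.2]
    have hx2 : ∑ e : Fin n × Fin n, μ e • Mg n ℝ e.1 e.2
        = ∑ k : {e : Fin n × Fin n // e.1 ≠ e.2}, lam k • Mbar n k.1.1 k.1.2 := by
      have hsplit : ∀ e : Fin n × Fin n, μ e • Mg n ℝ e.1 e.2
          = Λ e • Mg n ℝ e.1 e.2 + (r e.1 - r e.2) • Mg n ℝ e.1 e.2 := by
        intro e
        rw [← add_smul]
        congr 1
        rw [hμdef]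
        dsimp only
        ring
      rw [Finset.sum_congr rfl fun e _ => hsplit e, Finset.sum_add_distrib,
        kernel_mat n hn1 r, add_zero, hx1]
    rw [Set.mem_iUnion₂]
    refine ⟨p, hp, fun k => μ k.1, fun k => hμnn _, ?_⟩
    rw [← hx2]
    rw [← Finset.sum_subset (Finset.subset_univ (offEdges n ℓ p))
      (fun e _ he => by rw [hμ0 e he, zero_smul])]
    rw [← Finset.sum_coe_sort (offEdges n ℓ p) (fun e => μ e • Mg n ℝ e.1 e.2)]
    exact Finset.sum_congr rfl fun k _ => by
      try dsimp only
      rw [Mbar_eq_Mg n k.1.1 k.1.2 (offEdges_ne k.2)]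


lemma desc_const {n : ℕ} {ℓ : Fin n} {f : Fin n → Fin n} (hf : f ∈ arbs n ℓ)
    (g : Fin n → ℝ) (hstep : ∀ v, v ≠ ℓ → g (f v) ≤ g v) : ∀ v, g ℓ ≤ g v := by
  obtain ⟨hfl, hfn⟩ := mem_arbs_iff.mp hf
  have hstep' : ∀ v, g (f v) ≤ g v := by
    intro v
    by_cases hv : v = ℓ
    · rw [hv, hfl]
    · exact hstep v hv
  have hk : ∀ k v, g (f^[k] v) ≤ g v := by
    intro k
    induction k with
    | zero => intro v; exact le_refl _
    | succ k ih =>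
      intro v
      rw [Function.iterate_succ_apply]
      exact le_trans (ih (f v)) (hstep' v)
  intro v
  have := hk n v
  rwa [hfn v] at this

lemma part_c (n : ℕ) (hn : 2 ≤ n) (ℓ : Fin n) (p : Fin n → Fin n) (hp : p ∈ arbs n ℓ)
    (q : Fin n → Fin n) (hq : q ∈ arbs n ℓ) (hpq : p ≠ q) :
    interior (coneOf fun e : {e : Fin n × Fin n // e ∈ offEdges n ℓ p} =>
        Mbar n e.1.1 e.1.2) ∩
      interior (coneOf fun e : {e : Fin n × Fin n // e ∈ offEdges n ℓ q} =>
        Mbar n e.1.1 e.1.2) = ∅ := by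
  have hn1 : 1 ≤ n := by omega
  rw [Set.eq_empty_iff_forall_notMem]
  rintro x ⟨hxp, hxq⟩
  set A : {e : Fin n × Fin n // e ∈ offEdges n ℓ p} → ℝ :=
    fun e => cc n ℓ p x e.1.1 e.1.2 with hA
  set B : {e : Fin n × Fin n // e ∈ offEdges n ℓ q} → ℝ :=
    fun e => cc n ℓ q x e.1.1 e.1.2 with hB
  have hApos : ∀ e, 0 < A e := fun e => coord_pos_of_interior n hn1 ℓ p hp x hxp e
  have hBpos : ∀ e, 0 < B e := fun e => coord_pos_of_interior n hn1 ℓ q hq x hxq e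
  have h1 : ∑ e : Fin n × Fin n,
      (if h : e ∈ offEdges n ℓ p then A ⟨e, h⟩ else 0) • Mg n ℝ e.1 e.2 = x := by
    rw [sum_dite_mem n ℓ p A, ← Lmap_apply]
    exact Lmap_cc n ℓ p ℝ hn1 hp x
  have h2 : ∑ e : Fin n × Fin n,
      (if h : e ∈ offEdges n ℓ q then B ⟨e, h⟩ else 0) • Mg n ℝ e.1 e.2 = x := by
    rw [sum_dite_mem n ℓ q B, ← Lmap_apply]
    exact Lmap_cc n ℓ q ℝ hn1 hq x
  set lamf : Fin n × Fin n → ℝ := fun e =>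
    (if h : e ∈ offEdges n ℓ p then A ⟨e, h⟩ else 0)
      - (if h : e ∈ offEdges n ℓ q then B ⟨e, h⟩ else 0) with hlamf
  have hz : ∑ e : Fin n × Fin n, lamf e • Mg n ℝ e.1 e.2 = 0 := by
    have hsplit : ∀ e : Fin n × Fin n, lamf e • Mg n ℝ e.1 e.2
        = (if h : e ∈ offEdges n ℓ p then A ⟨e, h⟩ else 0) • Mg n ℝ e.1 e.2
          - (if h : e ∈ offEdges n ℓ q then B ⟨e, h⟩ else 0) • Mg n ℝ e.1 e.2 := by
      intro e
      rw [hlamf]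
      dsimp only
      rw [sub_smul]
    rw [Finset.sum_congr rfl fun e _ => hsplit e, Finset.sum_sub_distrib, h1, h2,
      sub_self]
  have hdiag : ∀ i, lamf (i, i) = 0 := by
    intro i
    have hip : (i, i) ∉ offEdges n ℓ p := fun hh => (offEdges_ne hh) rfl
    have hiq : (i, i) ∉ offEdges n ℓ q := fun hh => (offEdges_ne hh) rfl
    rw [hlamf]
    dsimp only
    rw [dif_neg hip, dif_neg hiq, sub_zero]
  have krep := kernel_rep n hn1 lamf hdiag hz
  set rf : Fin n → ℝ :=
    fun v => if (v : ℕ) = n - 1 then 0 else lamf (v, lst n hn1) with hrf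
  have krep' : ∀ i j, lamf (i, j) = rf i - rf j := by
    intro i j
    rw [hrf]
    dsimp only
    exact krep i j
  have hstep_p : ∀ v, v ≠ ℓ → rf (p v) ≤ rf v := by
    intro v hv
    have he : (p v, v) ∈ arbEdges n ℓ p := mem_arbEdges.mpr ⟨hv, rfl⟩
    have hnp : (p v, v) ∉ offEdges n ℓ p :=
      fun hoff => (mem_offEdges.mp hoff).2 (mem_arbEdges.mp he)
    have hble : lamf (p v, v) ≤ 0 := by
      rw [hlamf]
      dsimp only
      rw [dif_neg hnp, zero_sub]
      by_cases h : (p v, v) ∈ offEdges n ℓ q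
      · rw [dif_pos h]
        have := (hBpos ⟨_, h⟩).le
        linarith
      · rw [dif_neg h]
        linarith
    have hk := krep' (p v) v
    rw [hk] at hble
    linarith
  have hstep_q : ∀ v, v ≠ ℓ → rf v ≤ rf (q v) := by
    intro v hv
    have he : (q v, v) ∈ arbEdges n ℓ q := mem_arbEdges.mpr ⟨hv, rfl⟩
    have hnq : (q v, v) ∉ offEdges n ℓ q :=
      fun hoff => (mem_offEdges.mp hoff).2 (mem_arbEdges.mp he)
    have hble : 0 ≤ lamf (q v, v) := by
      rw [hlamf]
      dsimp only
      rw [dif_neg hnq, sub_zero]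
      by_cases h : (q v, v) ∈ offEdges n ℓ p
      · rw [dif_pos h]
        exact (hApos ⟨_, h⟩).le
      · rw [dif_neg h]
    have hk := krep' (q v) v
    rw [hk] at hble
    linarith
  have hPl : ∀ v, rf ℓ ≤ rf v := desc_const hp rf hstep_p
  have hQl : ∀ v, rf v ≤ rf ℓ := by
    have := desc_const hq (fun v => - rf v)
      (fun v hv => by
        have h := hstep_q v hv
        linarith)
    intro v
    have h := this v
    linarith
  have hconst : ∀ v, rf v = rf ℓ := fun v => le_antisymm (hQl v) (hPl v)
  apply hpq
  funext v
  by_cases hv : v = ℓ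
  · rw [hv, (mem_arbs_iff.mp hp).1, (mem_arbs_iff.mp hq).1]
  · by_contra hne
    have he : (p v, v) ∈ arbEdges n ℓ p := mem_arbEdges.mpr ⟨hv, rfl⟩
    have hnp : (p v, v) ∉ offEdges n ℓ p :=
      fun hoff => (mem_offEdges.mp hoff).2 (mem_arbEdges.mp he)
    have hoffq : (p v, v) ∈ offEdges n ℓ q := by
      rw [mem_offEdges]
      refine ⟨arb_ne hp hv, ?_⟩
      rintro ⟨_, h2⟩
      exact hne h2.symm
    have hz2 : lamf (p v, v) = 0 := by
      rw [krep' (p v) v, hconst (p v), hconst v]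
      ring
    have hval : lamf (p v, v) = - B ⟨(p v, v), hoffq⟩ := by
      rw [hlamf]
      dsimp only
      rw [dif_neg hnp, dif_pos hoffq, zero_sub]
    have := hBpos ⟨(p v, v), hoffq⟩
    rw [hval] at hz2
    linarith


end Assembly

end Stmt10

theorem stmt10 (n : ℕ) (hn : 2 ≤ n) (ℓ : Fin n) :
    (∀ p ∈ arbs n ℓ,
      ∃ b : Module.Basis {e : Fin n × Fin n // e ∈ offEdges n ℓ p} ℤ
          (Matrix (Fin (n - 1)) (Fin (n - 1)) ℤ),
        ∀ e, b e = MbarZ n e.1.1 e.1.2) ∧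
    (⋃ p ∈ arbs n ℓ,
        coneOf fun e : {e : Fin n × Fin n // e ∈ offEdges n ℓ p} => Mbar n e.1.1 e.1.2) =
      (coneOf fun e : {e : Fin n × Fin n // e.1 ≠ e.2} => Mbar n e.1.1 e.1.2) ∧
    ∀ p ∈ arbs n ℓ, ∀ q ∈ arbs n ℓ, p ≠ q →
      interior
          (coneOf fun e : {e : Fin n × Fin n // e ∈ offEdges n ℓ p} => Mbar n e.1.1 e.1.2) ∩
        interior
          (coneOf fun e : {e : Fin n × Fin n // e ∈ offEdges n ℓ q} => Mbar n e.1.1 e.1.2) =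
      ∅ := by
  have hn1 : 1 ≤ n := by omega
  exact ⟨fun p hp => Stmt10.part_a hn1 hp, Stmt10.part_b n hn ℓ,
    fun p hp q hq hpq => Stmt10.part_c n hn ℓ p hp q hq hpq⟩
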